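/- Let K be a field, X = {x₁,…,xₙ}, I_ρ a right ideal of K⟨X⟩ with right generating set F, and I_ρ^{φ̄} the right ideal of ℬ = K⟨X,T,T⁻¹⟩/J generated by {φ̄(f) : f ∈ F}. Then the two inclusions mon(I_ρ) ⊆ { f ∈ K⟨X⟩ : π(ι(f)) ∈ I_ρ^{φ̄} } ⊆ I_ρ hold. -/

import Mathlib

open scoped BigOperators

/-- The right ideal generated by a set `S`, i.e. the set of finite sums `∑ fᵢ * qᵢ`
with `fᵢ ∈ S` and `qᵢ` arbitrary ring elements. -/
def rightIdealSpan {A : Type*} [Semiring A] (S : Set A) : Set A :=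
  {x | ∃ (d : ℕ) (f q : Fin d → A), (∀ i, f i ∈ S) ∧ x = ∑ i, f i * q i}

/-- The alphabet `X ∪ T ∪ T⁻¹` with `n` letters `xᵢ`, `n` letters `tᵢ` and `n` letters
`tᵢ⁻¹` (one pair `tᵢ, tᵢ⁻¹` for each `xᵢ`). -/
abbrev XTTn (n : ℕ) := Fin n ⊕ (Fin n ⊕ Fin n)

/-- The relations generating the ideal `J ⊆ K⟨X,T,T⁻¹⟩`: the commutators
`xᵢt_j − t_jxᵢ` (`1 ≤ i,j ≤ n`) and `1 − t_j t_j⁻¹` (`1 ≤ j ≤ n`).  The quotient algebra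
`ℬ = K⟨X,T,T⁻¹⟩/J` is `RingQuot (Brel K n)` and the quotient map `π` is
`RingQuot.mkAlgHom K (Brel K n)`. -/
inductive Brel (K : Type*) [Field K] (n : ℕ) :
    FreeAlgebra K (XTTn n) → FreeAlgebra K (XTTn n) → Prop
  | comm (i j : Fin n) :
      Brel K n (FreeAlgebra.ι K (Sum.inl i) * FreeAlgebra.ι K (Sum.inr (Sum.inl j)))
        (FreeAlgebra.ι K (Sum.inr (Sum.inl j)) * FreeAlgebra.ι K (Sum.inl i))
  | inv (j : Fin n) :
      Brel K n
        (FreeAlgebra.ι K (Sum.inr (Sum.inl j)) * FreeAlgebra.ι K (Sum.inr (Sum.inr j))) 1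

/-- The canonical embedding `ι : K⟨X⟩ → K⟨X,T,T⁻¹⟩`, `xᵢ ↦ xᵢ`. -/
noncomputable def embB (K : Type*) [Field K] (n : ℕ) :
    FreeAlgebra K (Fin n) →ₐ[K] FreeAlgebra K (XTTn n) :=
  FreeAlgebra.lift K fun i => FreeAlgebra.ι K (Sum.inl i)

/-- The algebra homomorphism `φ : K⟨X⟩ → K⟨X,T,T⁻¹⟩`, `xᵢ ↦ xᵢtᵢ`. -/
noncomputable def phiB (K : Type*) [Field K] (n : ℕ) :
    FreeAlgebra K (Fin n) →ₐ[K] FreeAlgebra K (XTTn n) :=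
  FreeAlgebra.lift K fun i =>
    FreeAlgebra.ι K (Sum.inl i) * FreeAlgebra.ι K (Sum.inr (Sum.inl i))

/-- The monomial of `K⟨X⟩` corresponding to a word `w ∈ ⟨X⟩`. -/
noncomputable def monoW (K : Type*) [Field K] {n : ℕ} (w : FreeMonoid (Fin n)) :
    FreeAlgebra K (Fin n) :=
  ((FreeMonoid.toList w).map (FreeAlgebra.ι K)).prod

/-! ### Auxiliary lemmas about `rightIdealSpan` -/

section SpanLemmas

variable {A B : Type*} [Semiring A] [Semiring B] {S : Set A}

theorem rightIdealSpan.mul_mem {x : A} (h : x ∈ rightIdealSpan S) (r : A) :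
    x * r ∈ rightIdealSpan S := by
  obtain ⟨d, f, q, hf, rfl⟩ := h
  exact ⟨d, f, fun i => q i * r, hf, by rw [Finset.sum_mul]; simp [mul_assoc]⟩

theorem rightIdealSpan.zero_mem : (0 : A) ∈ rightIdealSpan S :=
  ⟨0, fun i => i.elim0, fun i => i.elim0, fun i => i.elim0, by simp⟩

theorem rightIdealSpan.add_mem {x y : A} (hx : x ∈ rightIdealSpan S)
    (hy : y ∈ rightIdealSpan S) : x + y ∈ rightIdealSpan S := by
  obtain ⟨d₁, f₁, q₁, hf₁, rfl⟩ := hx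
  obtain ⟨d₂, f₂, q₂, hf₂, rfl⟩ := hy
  refine ⟨d₁ + d₂, Fin.append f₁ f₂, Fin.append q₁ q₂, ?_, ?_⟩
  · intro i
    refine Fin.addCases (fun j => ?_) (fun j => ?_) i
    · rw [Fin.append_left]; exact hf₁ j
    · rw [Fin.append_right]; exact hf₂ j
  · rw [Fin.sum_univ_add]
    simp [Fin.append_left, Fin.append_right]

theorem rightIdealSpan.sum_mem {ι : Type*} (s : Finset ι) {g : ι → A}
    (h : ∀ i ∈ s, g i ∈ rightIdealSpan S) : (∑ i ∈ s, g i) ∈ rightIdealSpan S := by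
  classical
  induction s using Finset.induction_on with
  | empty => simpa using rightIdealSpan.zero_mem
  | insert _ _ hni ih =>
    rw [Finset.sum_insert hni]
    exact rightIdealSpan.add_mem (h _ (Finset.mem_insert_self _ _))
      (ih fun i hi => h i (Finset.mem_insert_of_mem hi))

theorem rightIdealSpan.map {ψ : A →+* B} {x : A} (h : x ∈ rightIdealSpan S) :
    ψ x ∈ rightIdealSpan (ψ '' S) := by
  obtain ⟨d, f, q, hf, rfl⟩ := h
  exact ⟨d, fun i => ψ (f i), fun i => ψ (q i), fun i => ⟨f i, hf i, rfl⟩, by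
    simp [map_sum]⟩

end SpanLemmas

/-! ### The retraction `σ : ℬ → K⟨X⟩` -/

section Sigma

variable (K : Type*) [Field K] (n : ℕ)

/-- `σ : K⟨X,T,T⁻¹⟩ → K⟨X⟩`, `xᵢ ↦ xᵢ`, `tⱼ ↦ 1`, `tⱼ⁻¹ ↦ 1`. -/
noncomputable def sigB : FreeAlgebra K (XTTn n) →ₐ[K] FreeAlgebra K (Fin n) :=
  FreeAlgebra.lift K (Sum.elim (FreeAlgebra.ι K) fun _ => 1)

theorem sigB_rel : ∀ a b, Brel K n a b → sigB K n a = sigB K n b := by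
  intro a b h
  cases h with
  | comm i j => simp [sigB]
  | inv j => simp [sigB]

/-- The induced map `σ̄ : ℬ → K⟨X⟩`. -/
noncomputable def sigBar : RingQuot (Brel K n) →ₐ[K] FreeAlgebra K (Fin n) :=
  RingQuot.liftAlgHom K ⟨sigB K n, sigB_rel K n⟩

theorem sigBar_mk (a : FreeAlgebra K (XTTn n)) :
    sigBar K n (RingQuot.mkAlgHom K (Brel K n) a) = sigB K n a := by
  rw [sigBar, RingQuot.liftAlgHom_mkAlgHom_apply]

theorem sigB_embB (f : FreeAlgebra K (Fin n)) : sigB K n (embB K n f) = f := by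
  have : (sigB K n).comp (embB K n) = AlgHom.id K (FreeAlgebra K (Fin n)) := by
    apply FreeAlgebra.hom_ext
    funext i
    simp [sigB, embB]
  calc sigB K n (embB K n f) = ((sigB K n).comp (embB K n)) f := rfl
    _ = f := by rw [this]; rfl

theorem sigB_phiB (f : FreeAlgebra K (Fin n)) : sigB K n (phiB K n f) = f := by
  have : (sigB K n).comp (phiB K n) = AlgHom.id K (FreeAlgebra K (Fin n)) := by
    apply FreeAlgebra.hom_ext
    funext i
    simp [sigB, phiB]
  calc sigB K n (phiB K n f) = ((sigB K n).comp (phiB K n)) f := rfl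
    _ = f := by rw [this]; rfl

end Sigma

/-! ### Commutation lemmas in `ℬ` -/

section Comm

variable (K : Type*) [Field K] (n : ℕ)

local notation "π" => RingQuot.mkAlgHom K (Brel K n)

/-- The image of `tⱼ` in `ℬ`. -/
noncomputable def tB (j : Fin n) : RingQuot (Brel K n) :=
  RingQuot.mkAlgHom K (Brel K n) (FreeAlgebra.ι K (Sum.inr (Sum.inl j)))

/-- The image of `tⱼ⁻¹` in `ℬ`. -/
noncomputable def tInvB (j : Fin n) : RingQuot (Brel K n) :=
  RingQuot.mkAlgHom K (Brel K n) (FreeAlgebra.ι K (Sum.inr (Sum.inr j)))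

theorem tB_mul_tInvB (j : Fin n) : tB K n j * tInvB K n j = 1 := by
  have := RingQuot.mkAlgHom_rel K (Brel.inv (K := K) (n := n) j)
  simpa [tB, tInvB, map_mul] using this

theorem tB_comm_emb (j : Fin n) (f : FreeAlgebra K (Fin n)) :
    tB K n j * π (embB K n f) = π (embB K n f) * tB K n j := by
  induction f using FreeAlgebra.induction with
  | grade0 r => simp [Algebra.commutes, Algebra.algebraMap_eq_smul_one, mul_smul_comm,
      smul_mul_assoc]
  | grade1 i =>
    have := RingQuot.mkAlgHom_rel K (Brel.comm (K := K) (n := n) i j)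
    simp only [map_mul] at this
    simp [embB, tB, FreeAlgebra.lift_ι_apply, this]
  | mul a b ha hb => simp only [map_mul, ← mul_assoc, ha]; rw [mul_assoc, hb, mul_assoc]
  | add a b ha hb => simp [map_add, mul_add, add_mul, ha, hb]

/-- Product of letters of a word in `K⟨X⟩`. -/
noncomputable def monoL (l : List (Fin n)) : FreeAlgebra K (Fin n) :=
  (l.map (FreeAlgebra.ι K)).prod

/-- `t`-word in `ℬ`. -/
noncomputable def twL (l : List (Fin n)) : RingQuot (Brel K n) :=
  (l.map (tB K n)).prod

/-- Reversed `t⁻¹`-word in `ℬ`. -/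
noncomputable def twInvL (l : List (Fin n)) : RingQuot (Brel K n) :=
  ((l.map (tInvB K n)).reverse).prod

theorem twL_mul_twInvL (l : List (Fin n)) : twL K n l * twInvL K n l = 1 := by
  induction l with
  | nil => simp [twL, twInvL]
  | cons a l ih =>
    have h1 : twL K n (a :: l) = tB K n a * twL K n l := by simp [twL]
    have h2 : twInvL K n (a :: l) = twInvL K n l * tInvB K n a := by
      simp [twInvL, List.prod_append]
    rw [h1, h2, mul_assoc, ← mul_assoc (twL K n l), ih, one_mul, tB_mul_tInvB]

theorem phi_monoL (l : List (Fin n)) :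
    π (phiB K n (monoL K n l)) = π (embB K n (monoL K n l)) * twL K n l := by
  induction l with
  | nil => simp [monoL, twL]
  | cons a l ih =>
    have hm : monoL K n (a :: l) = FreeAlgebra.ι K a * monoL K n l := by simp [monoL]
    rw [hm, map_mul, map_mul, map_mul, map_mul, ih]
    have hφ : π (phiB K n (FreeAlgebra.ι K a)) =
        π (embB K n (FreeAlgebra.ι K a)) * tB K n a := by
      simp [phiB, embB, tB, FreeAlgebra.lift_ι_apply, map_mul]
    rw [hφ]
    have htw : twL K n (a :: l) = tB K n a * twL K n l := by simp [twL]
    rw [htw, mul_assoc, ← mul_assoc (tB K n a), tB_comm_emb, mul_assoc, mul_assoc]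

theorem emb_monoW_eq (w : FreeMonoid (Fin n)) :
    π (embB K n (monoW K w)) =
      π (phiB K n (monoW K w)) * twInvL K n (FreeMonoid.toList w) := by
  have hw : monoW K w = monoL K n (FreeMonoid.toList w) := rfl
  rw [hw, phi_monoL, mul_assoc, twL_mul_twInvL, mul_one]

end Comm

/-- **The two inclusions `mon(I_ρ) ⊆ { f : π(ι(f)) ∈ I_ρ^{φ̄} } ⊆ I_ρ`.**
Here `I_ρ` is the right ideal of `K⟨X⟩` generated by `F`, `I_ρ^{φ̄}` is the right ideal of
`ℬ = K⟨X,T,T⁻¹⟩/J` generated by `{φ̄(f) : f ∈ F}`, and `mon(I_ρ)` is the right ideal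
generated by all monomials contained in `I_ρ`. -/
theorem monomialPart_subset_contraction_subset (K : Type*) [Field K] (n : ℕ)
    (F : Set (FreeAlgebra K (Fin n))) :
    rightIdealSpan {m | (∃ w : FreeMonoid (Fin n), m = monoW K w) ∧ m ∈ rightIdealSpan F} ⊆
        {f | RingQuot.mkAlgHom K (Brel K n) (embB K n f) ∈
          rightIdealSpan ((fun g => RingQuot.mkAlgHom K (Brel K n) (phiB K n g)) '' F)} ∧
      {f | RingQuot.mkAlgHom K (Brel K n) (embB K n f) ∈
          rightIdealSpan ((fun g => RingQuot.mkAlgHom K (Brel K n) (phiB K n g)) '' F)} ⊆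
        rightIdealSpan F := by
  set π := RingQuot.mkAlgHom K (Brel K n)
  have himg : (⇑(π.comp (phiB K n)).toRingHom) '' F = (fun g => π (phiB K n g)) '' F := by
    apply Set.image_congr
    intro a _
    rfl
  constructor
  · -- first inclusion
    rintro x ⟨d, m, q, hm, rfl⟩
    rw [Set.mem_setOf_eq, map_sum, map_sum]
    apply rightIdealSpan.sum_mem
    intro i _
    rw [map_mul, map_mul]
    apply rightIdealSpan.mul_mem
    obtain ⟨⟨w, hw⟩, hmem⟩ := hm i
    rw [hw, emb_monoW_eq]
    apply rightIdealSpan.mul_mem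
    have := rightIdealSpan.map (ψ := (π.comp (phiB K n)).toRingHom) hmem
    rw [himg, hw] at this
    exact this
  · -- second inclusion
    intro f hf
    have h1 := rightIdealSpan.map (ψ := (sigBar K n).toRingHom) hf
    have h2 : (sigBar K n) (π (embB K n f)) = f := by
      rw [sigBar_mk, sigB_embB]
    have h3 : (⇑(sigBar K n).toRingHom) '' ((fun g => π (phiB K n g)) '' F) = F := by
      rw [Set.image_image]
      have : (fun g => (sigBar K n).toRingHom (π (phiB K n g))) = fun g => g := by
        funext g
        simp only [AlgHom.toRingHom_eq_coe, RingHom.coe_coe]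
        rw [sigBar_mk, sigB_phiB]
      rw [this, Set.image_id']
    rw [h3] at h1
    simp only [AlgHom.toRingHom_eq_coe, RingHom.coe_coe] at h1
    rwa [h2] at h1
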